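/- Let F = (V,E) be a finite multigraph and ℓ : V → [n] a labelling such that each unordered pair {i,j} ⊆ [n] appears an even number of times as the label pair of an edge of F. Then the number of distinct labels |{ℓ(v) : v ∈ V}| is at most |E|/2 + c, where c is the number of connected components of F. -/

import Mathlib

open SimpleGraph

private lemma key_walk {W : Type} {G : SimpleGraph W} (u v : W) {a b : W}
    (w : G.Walk a b) :
    (G.deleteEdges {s(u, v)}).Reachable a b ∨ (G.deleteEdges {s(u, v)}).Reachable a u ∨
      (G.deleteEdges {s(u, v)}).Reachable a v := by
  induction w with
  | nil => exact Or.inl (Reachable.refl _)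
  | @cons a x b h p ih =>
    by_cases he : s(a, x) = s(u, v)
    · rcases Sym2.eq_iff.mp he with ⟨rfl, rfl⟩ | ⟨rfl, rfl⟩
      · exact Or.inr (Or.inl (Reachable.refl _))
      · exact Or.inr (Or.inr (Reachable.refl _))
    · have hadj : (G.deleteEdges {s(u, v)}).Adj a x := by
        rw [deleteEdges_adj]
        exact ⟨h, by simpa using he⟩
      rcases ih with h1 | h1 | h1
      · exact Or.inl (hadj.reachable.trans h1)
      · exact Or.inr (Or.inl (hadj.reachable.trans h1))
      · exact Or.inr (Or.inr (hadj.reachable.trans h1))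

private lemma comps_delete {W : Type} [Fintype W] (G : SimpleGraph W) (u v : W) :
    Nat.card (G.deleteEdges {s(u, v)}).ConnectedComponent ≤
      Nat.card G.ConnectedComponent + 1 := by
  classical
  set G' := G.deleteEdges {s(u, v)} with hG'
  let φ : G' →g G := Hom.ofLE (deleteEdges_le _)
  let g : G'.ConnectedComponent → G.ConnectedComponent ⊕ Unit := fun c =>
    if c = G'.connectedComponentMk v then Sum.inr () else Sum.inl (c.map φ)
  have hinj : Function.Injective g := by
    intro c d hcd
    by_cases hc : c = G'.connectedComponentMk v <;>
      by_cases hd : d = G'.connectedComponentMk v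
    · rw [hc, hd]
    · simp only [g, if_pos hc, if_neg hd] at hcd; cases hcd
    · simp only [g, if_neg hc, if_pos hd] at hcd; cases hcd
    · simp only [g, if_neg hc, if_neg hd, Sum.inl.injEq] at hcd
      obtain ⟨a, rfl⟩ := c.exists_rep
      obtain ⟨b, rfl⟩ := d.exists_rep
      have hreach : G.Reachable (φ a) (φ b) := ConnectedComponent.exact hcd
      have hreach' : G.Reachable a b := hreach
      obtain ⟨w⟩ := hreach'
      rcases key_walk u v w with h1 | h1 | h1
      · exact ConnectedComponent.sound h1
      · -- a ~G' u ; consider b as well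
        rcases key_walk u v w.reverse with h2 | h2 | h2
        · exact ConnectedComponent.sound h2.symm
        · exact (ConnectedComponent.sound h1).trans (ConnectedComponent.sound h2).symm
        · exact absurd (ConnectedComponent.sound h2) hd
      · exact absurd (ConnectedComponent.sound h1) hc
  calc Nat.card G'.ConnectedComponent ≤ Nat.card (G.ConnectedComponent ⊕ Unit) :=
        Nat.card_le_card_of_injective g hinj
    _ = Nat.card G.ConnectedComponent + 1 := by simp

private lemma vert_le_edge_add_comps (k : ℕ) :
    ∀ {W : Type} [Fintype W] (G : SimpleGraph W), G.edgeSet.ncard = k →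
      Fintype.card W ≤ k + Nat.card G.ConnectedComponent := by
  induction k with
  | zero =>
    intro W _ G hk
    have hbot : G = ⊥ := by
      rw [← edgeSet_eq_empty]
      exact (Set.ncard_eq_zero (Set.toFinite _)).mp hk
    subst hbot
    have hinj : Function.Injective ((⊥ : SimpleGraph W).connectedComponentMk) := by
      intro a b h
      exact reachable_bot.mp (ConnectedComponent.exact h)
    simpa [Nat.card_eq_fintype_card] using Nat.card_le_card_of_injective _ hinj
  | succ k ih =>
    intro W _ G hk
    have hne : G.edgeSet.Nonempty := by
      rw [Set.nonempty_iff_ne_empty]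
      intro h
      rw [h] at hk
      simp at hk
    obtain ⟨e, he⟩ := hne
    obtain ⟨u, v, rfl⟩ : ∃ u v, s(u, v) = e := by
      induction e using Sym2.ind with | _ x y => exact ⟨x, y, rfl⟩
    have hk' : (G.deleteEdges {s(u, v)}).edgeSet.ncard = k := by
      rw [edgeSet_deleteEdges]
      have := Set.ncard_diff_singleton_of_mem he
      rw [this, hk]
      omega
    have h1 := ih (G.deleteEdges {s(u, v)}) hk'
    have h2 := comps_delete G u v
    omega

/-- A multigraph is given by a finite vertex type `V`, a finite edge type `E`,
and an endpoint map `ends : E → Sym2 V` (parallel edges are allowed). -/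
theorem stmt_2 (V E : Type) [Fintype V] [Fintype E] [DecidableEq V]
    (ends : E → Sym2 V) (n : ℕ) (ℓ : V → Fin n)
    (heven : ∀ p : Sym2 (Fin n),
      Even ((Finset.univ.filter (fun e : E => Sym2.map ℓ (ends e) = p)).card)) :
    ((Finset.univ.image ℓ).card : ℝ) ≤ (Fintype.card E : ℝ) / 2 +
      (Nat.card (SimpleGraph.fromRel (fun u v : V => ∃ e, ends e = s(u, v))).ConnectedComponent : ℝ) := by
  classical
  set L := Finset.univ.image ℓ with hL
  set GV := SimpleGraph.fromRel (fun u v : V => ∃ e, ends e = s(u, v)) with hGV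
  let H : SimpleGraph {x : Fin n // x ∈ L} :=
    SimpleGraph.fromRel (fun a b => ∃ e, Sym2.map ℓ (ends e) = s(a.val, b.val))
  -- the vertex bound from the general lemma
  have hmain := vert_le_edge_add_comps H.edgeSet.ncard H rfl
  rw [Fintype.card_coe] at hmain
  -- bound 1 : 2 * |edges H| ≤ |E|
  have hbound1 : 2 * H.edgeSet.ncard ≤ Fintype.card E := by
    have hfin : H.edgeSet.Finite := Set.toFinite _
    set T := hfin.toFinset with hT
    have hTcard : T.card = H.edgeSet.ncard := (Set.ncard_eq_toFinset_card _ hfin).symm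
    set S : Sym2 {x : Fin n // x ∈ L} → Finset E := fun q =>
      Finset.univ.filter (fun e => Sym2.map ℓ (ends e) = Sym2.map Subtype.val q) with hS
    have hcard2 : ∀ q ∈ T, 2 ≤ (S q).card := by
      intro q hq
      rw [Set.Finite.mem_toFinset] at hq
      obtain ⟨a, b, rfl⟩ : ∃ a b, s(a, b) = q := by
        induction q using Sym2.ind with | _ x y => exact ⟨x, y, rfl⟩
      rw [mem_edgeSet] at hq
      obtain ⟨hab, h⟩ := (SimpleGraph.fromRel_adj _ _ _).mp hq
      have hmem : ∃ e, e ∈ S s(a, b) := by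
        rcases h with ⟨e, hee⟩ | ⟨e, hee⟩
        · exact ⟨e, by
            simp only [hS, Finset.mem_filter, Finset.mem_univ, true_and, Sym2.map_pair_eq]
            exact hee⟩
        · exact ⟨e, by
            simp only [hS, Finset.mem_filter, Finset.mem_univ, true_and, Sym2.map_pair_eq]
            exact hee.trans Sym2.eq_swap⟩
      obtain ⟨e, hmem⟩ := hmem
      have hpos : (S s(a, b)).card ≠ 0 := by
        intro h0
        rw [Finset.card_eq_zero] at h0
        rw [h0] at hmem
        exact absurd hmem (Finset.notMem_empty e)
      obtain ⟨m, hm⟩ : Even ((S s(a, b)).card) := heven (Sym2.map Subtype.val s(a, b))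
      omega
    have hdisj : ∀ q₁ ∈ T, ∀ q₂ ∈ T, q₁ ≠ q₂ → Disjoint (S q₁) (S q₂) := by
      intro q₁ _ q₂ _ hne
      rw [Finset.disjoint_left]
      intro e he1 he2
      simp only [hS, Finset.mem_filter, Finset.mem_univ, true_and] at he1 he2
      exact hne (Sym2.map.injective Subtype.val_injective (he1 ▸ he2))
    calc 2 * H.edgeSet.ncard = ∑ _q ∈ T, 2 := by
            rw [Finset.sum_const, hTcard]; ring
      _ ≤ ∑ q ∈ T, (S q).card := Finset.sum_le_sum hcard2
      _ = (T.biUnion S).card := (Finset.card_biUnion hdisj).symm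
      _ ≤ Finset.univ.card := Finset.card_le_card (Finset.subset_univ _)
      _ = Fintype.card E := Finset.card_univ
  -- bound 2 : components of H are at most components of GV
  have hbound2 : Nat.card H.ConnectedComponent ≤ Nat.card GV.ConnectedComponent := by
    let f : V → H.ConnectedComponent := fun x =>
      H.connectedComponentMk ⟨ℓ x, by simp [hL]⟩
    have hf : ∀ a b : V, GV.Adj a b → f a = f b := by
      intro a b hab
      obtain ⟨hne, h⟩ := (SimpleGraph.fromRel_adj _ _ _).mp hab
      have hex : ∃ e, ends e = s(a, b) := by
        rcases h with ⟨e, he⟩ | ⟨e, he⟩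
        · exact ⟨e, he⟩
        · exact ⟨e, he.trans Sym2.eq_swap⟩
      obtain ⟨e, he⟩ := hex
      by_cases hl : ℓ a = ℓ b
      · simp only [f]
        congr 1
        exact Subtype.ext hl
      · have hadj : H.Adj ⟨ℓ a, by simp [hL]⟩ ⟨ℓ b, by simp [hL]⟩ := by
          rw [SimpleGraph.fromRel_adj]
          refine ⟨fun hc => hl (congrArg Subtype.val hc), Or.inl ⟨e, ?_⟩⟩
          rw [he, Sym2.map_pair_eq]
        exact ConnectedComponent.sound hadj.reachable
    have hwalk : ∀ (a b : V) (w : GV.Walk a b), f a = f b := by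
      intro a b w
      induction w with
      | nil => rfl
      | cons h p ih => exact (hf _ _ h).trans ih
    let F : GV.ConnectedComponent → H.ConnectedComponent :=
      ConnectedComponent.lift f (fun a b p _ => hwalk a b p)
    have hsurj : Function.Surjective F := by
      intro c
      obtain ⟨⟨x, hx⟩, rfl⟩ := c.exists_rep
      rw [hL, Finset.mem_image] at hx
      obtain ⟨a, -, rfl⟩ := hx
      exact ⟨GV.connectedComponentMk a, rfl⟩
    exact Nat.card_le_card_of_surjective F hsurj
  -- assemble
  have hC : (0:ℝ) ≤ Nat.card GV.ConnectedComponent := by positivity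
  have h1 : (L.card : ℝ) ≤ (H.edgeSet.ncard : ℝ) + (Nat.card H.ConnectedComponent : ℝ) := by
    exact_mod_cast hmain
  have h2 : 2 * (H.edgeSet.ncard : ℝ) ≤ (Fintype.card E : ℝ) := by exact_mod_cast hbound1
  have h3 : (Nat.card H.ConnectedComponent : ℝ) ≤ (Nat.card GV.ConnectedComponent : ℝ) := by
    exact_mod_cast hbound2
  linarith
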